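/- Let Δ ≥ 2 be an integer. There exists a field k of characteristic zero with algebraically closed k̄ = algebraic closure such that [k̄:k] is infinite and no element of k̄ has an orbit of length exactly Δ under Gal(k̄/k); equivalently, no finite extension of k inside k̄ has degree exactly Δ whose generated extension is obtained from a Galois orbit of size Δ. -/

import Mathlib

open Polynomial IntermediateField Module

private lemma aux_no_rat_root {p : ℕ} (hp3 : 3 ≤ p) : ∀ b : ℚ, b ^ p ≠ 2 := by
  intro b h
  have hb : b ≠ 0 := by
    rintro rfl
    rw [zero_pow (by omega : p ≠ 0)] at h
    norm_num at h
  haveI : Fact (Nat.Prime 2) := ⟨Nat.prime_two⟩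
  have h1 : padicValRat 2 (b ^ p) = p * padicValRat 2 b := padicValRat.pow b
  rw [h, show ((2:ℚ)) = ((2:ℕ):ℚ) by norm_num, padicValRat.self (by norm_num)] at h1
  have : (p : ℤ) ∣ 1 := Dvd.intro _ h1.symm
  have := Int.le_of_dvd one_pos this
  omega

private lemma aux_zorn (F0 : IntermediateField ℚ (AlgebraicClosure ℚ)) (a : AlgebraicClosure ℚ)
    (ha : a ∉ F0) :
    ∃ K : IntermediateField ℚ (AlgebraicClosure ℚ), F0 ≤ K ∧ a ∉ K ∧
      ∀ F, K ≤ F → a ∉ F → F = K := by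
  have hchains : ∀ c ⊆ {F : IntermediateField ℚ (AlgebraicClosure ℚ) | F0 ≤ F ∧ a ∉ F},
      IsChain (· ≤ ·) c → ∀ y ∈ c, ∃ ub ∈ {F : IntermediateField ℚ (AlgebraicClosure ℚ) | F0 ≤ F ∧ a ∉ F},
        ∀ z ∈ c, z ≤ ub := by
    intro c hcs hchain y hyc
    haveI : Nonempty c := ⟨⟨y, hyc⟩⟩
    have hdir : Directed (· ≤ ·) (fun i : c => (i : IntermediateField ℚ (AlgebraicClosure ℚ))) :=
      (IsChain.directedOn hchain).directed_val
    refine ⟨sSup c, ⟨le_trans (hcs hyc).1 (le_sSup hyc), ?_⟩, fun z hz => le_sSup hz⟩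
    intro hasup
    rw [sSup_eq_iSup'] at hasup
    rw [← SetLike.mem_coe, IntermediateField.coe_iSup_of_directed hdir] at hasup
    obtain ⟨s, ⟨F, rfl⟩, hmem⟩ := hasup
    exact (hcs F.2).2 hmem
  obtain ⟨K, hK0, hKs, hKmax⟩ := zorn_le_nonempty₀
    {F : IntermediateField ℚ (AlgebraicClosure ℚ) | F0 ≤ F ∧ a ∉ F} hchains F0 ⟨le_rfl, ha⟩
  exact ⟨K, hKs.1, hKs.2, fun F hKF haF =>
    le_antisymm (hKmax ⟨le_trans hKs.1 hKF, haF⟩ hKF) hKF⟩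

set_option maxHeartbeats 4000000
set_option synthInstance.maxHeartbeats 400000

/-- For every `Δ ≥ 2` there is a field `k` of characteristic zero (realized as an
intermediate field of `ℚ ⊆ AlgebraicClosure ℚ`, so that `AlgebraicClosure ℚ` is an
algebraic closure of `k`) such that `[k̄:k]` is infinite and no element `β` of the
algebraic closure satisfies `[k(β):k] = Δ`, i.e., no Galois orbit has size exactly `Δ`. -/
theorem stmt_8 (Δ : ℕ) (hΔ : 2 ≤ Δ) :
    ∃ k : IntermediateField ℚ (AlgebraicClosure ℚ),
      ¬ Module.Finite k (AlgebraicClosure ℚ) ∧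
      ∀ β : AlgebraicClosure ℚ,
        Module.finrank k
          (IntermediateField.adjoin k {β} : IntermediateField k (AlgebraicClosure ℚ)) ≠ Δ := by
  classical
  obtain ⟨p, hpΔ, hp⟩ := Nat.exists_infinite_primes (Δ + 1)
  have hp3 : 3 ≤ p := by
    rcases Nat.lt_or_ge p 3 with h | h
    · interval_cases p <;> omega
    · exact h
  have hp2 : p ≠ 2 := by omega
  have hΔp : Δ < p := by omega
  haveI : NeZero p := ⟨hp.pos.ne'⟩
  haveI : NeZero (p : AlgebraicClosure ℚ) := ⟨Nat.cast_ne_zero.mpr hp.pos.ne'⟩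
  -- primitive p-th root of unity
  obtain ⟨ζ, hζ⟩ : ∃ ζ : AlgebraicClosure ℚ, IsPrimitiveRoot ζ p := by
    have h0 : (cyclotomic p (AlgebraicClosure ℚ)).degree ≠ 0 := by
      rw [degree_cyclotomic]
      exact_mod_cast (Nat.totient_pos.mpr hp.pos).ne'
    obtain ⟨ζ, hζ⟩ := IsAlgClosed.exists_root _ h0
    exact ⟨ζ, (isRoot_cyclotomic_iff).mp hζ⟩
  -- a p-th root of 2
  obtain ⟨a, haroot⟩ := IsAlgClosed.exists_pow_nat_eq (2 : AlgebraicClosure ℚ) hp.pos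
  -- the minimal polynomial of `a` over `ℚ`
  have hQirr : Irreducible (X ^ p - C (2 : ℚ)) :=
    X_pow_sub_C_irreducible_of_prime hp (aux_no_rat_root hp3)
  have hamin : minpoly ℚ a = X ^ p - C (2 : ℚ) := by
    refine (minpoly.eq_of_irreducible_of_monic hQirr ?_ (monic_X_pow_sub_C _ hp.pos.ne')).symm
    simp [haroot]
  -- `a` is not in `ℚ(ζ)`
  haveI : Algebra.IsAlgebraic ℚ (AlgebraicClosure ℚ) := AlgebraicClosure.isAlgebraic ℚ
  have hζint : IsIntegral ℚ ζ := (Algebra.IsAlgebraic.isAlgebraic ζ).isIntegral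
  haveI : FiniteDimensional ℚ ℚ⟮ζ⟯ := IntermediateField.adjoin.finiteDimensional hζint
  have hF0rank : Module.finrank ℚ ℚ⟮ζ⟯ = p - 1 := by
    rw [IntermediateField.adjoin.finrank hζint, ← cyclotomic_eq_minpoly_rat hζ hp.pos,
      natDegree_cyclotomic, Nat.totient_prime hp]
  have haF0 : a ∉ ℚ⟮ζ⟯ := by
    intro haF0
    set y : ℚ⟮ζ⟯ := ⟨a, haF0⟩ with hy
    have hymin : minpoly ℚ y = X ^ p - C (2 : ℚ) := by
      rw [← hamin]
      exact (minpoly.algHom_eq (IntermediateField.val ℚ⟮ζ⟯) Subtype.val_injective y).symm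
    have hyint : IsIntegral ℚ y := by
      refine ⟨X ^ p - C (2 : ℚ), monic_X_pow_sub_C _ hp.pos.ne', ?_⟩
      have : minpoly ℚ y ≠ 0 := hymin ▸ X_pow_sub_C_ne_zero hp.pos _
      rw [← hymin]
      exact minpoly.aeval ℚ y
    haveI := IntermediateField.adjoin.finiteDimensional hyint
    have hrk : Module.finrank ℚ ↥(IntermediateField.adjoin ℚ {y}) = p := by
      rw [IntermediateField.adjoin.finrank hyint, hymin, natDegree_X_pow_sub_C]
    have hdvd : p ∣ p - 1 := by
      rw [← hF0rank, ← hrk]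
      exact ⟨Module.finrank ↥(IntermediateField.adjoin ℚ {y}) ↥ℚ⟮ζ⟯,
        (Module.finrank_mul_finrank ℚ ↥(IntermediateField.adjoin ℚ {y}) ↥ℚ⟮ζ⟯).symm⟩
    have := Nat.le_of_dvd (by omega) hdvd
    omega
  -- the maximal field
  obtain ⟨K, hK0, haK, hKmax⟩ := aux_zorn ℚ⟮ζ⟯ a haF0
  have hζK : ζ ∈ K := hK0 (IntermediateField.mem_adjoin_simple_self ℚ ζ)
  haveI : Algebra.IsAlgebraic (↥K) (AlgebraicClosure ℚ) := Algebra.IsAlgebraic.tower_top (K := ℚ) ↥K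
  have hKpow : ∀ b : ↥K, b ^ p ≠ (2 : ↥K) := by
    intro b hb
    have hb2 : (b : AlgebraicClosure ℚ) ^ p = 2 := by
      have h := congrArg (IntermediateField.val K) hb
      push_cast at h
      exact_mod_cast h
    have hbne : (b : AlgebraicClosure ℚ) ≠ 0 := by
      intro h0
      rw [h0, zero_pow hp.pos.ne'] at hb2
      norm_num at hb2
    have hz1 : (a * (b : AlgebraicClosure ℚ)⁻¹) ^ p = 1 := by
      rw [mul_pow, haroot, inv_pow, hb2]
      norm_num
    obtain ⟨i, _, hi⟩ := hζ.eq_pow_of_pow_eq_one hz1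
    have hzK : a * (b : AlgebraicClosure ℚ)⁻¹ ∈ K := hi ▸ pow_mem hζK i
    refine haK ?_
    have hab : a = a * (b : AlgebraicClosure ℚ)⁻¹ * b := by field_simp
    rw [hab]
    exact mul_mem hzK b.2
  refine ⟨K, ?_, ?_⟩
  · intro hfin
    haveI := hfin
    set d := Module.finrank (↥K) (AlgebraicClosure ℚ) with hd
    obtain ⟨c, hc⟩ := IsAlgClosed.exists_pow_nat_eq (2 : AlgebraicClosure ℚ)
      (n := p ^ (d + 1)) (pow_pos hp.pos _)
    have hcirr : Irreducible (X ^ p ^ (d + 1) - C (2 : ↥K)) :=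
      X_pow_sub_C_irreducible_of_prime_pow hp hp2 (d + 1) hKpow
    have hcmin : minpoly (↥K) c = X ^ p ^ (d + 1) - C (2 : ↥K) := by
      refine (minpoly.eq_of_irreducible_of_monic hcirr ?_
        (monic_X_pow_sub_C _ (pow_ne_zero _ hp.pos.ne'))).symm
      simp [hc, map_ofNat]
    have hcint : IsIntegral (↥K) c := (Algebra.IsAlgebraic.isAlgebraic c).isIntegral
    haveI := IntermediateField.adjoin.finiteDimensional hcint
    have hrkc : Module.finrank (↥K) ↥(IntermediateField.adjoin (↥K) {c}) = p ^ (d + 1) := by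
      rw [IntermediateField.adjoin.finrank hcint, hcmin, natDegree_X_pow_sub_C]
    have hle : Module.finrank (↥K) ↥(IntermediateField.adjoin (↥K) {c}) ≤ d :=
      Submodule.finrank_le (Subalgebra.toSubmodule (IntermediateField.adjoin (↥K) {c}).toSubalgebra)
    have hlt : d + 1 < p ^ (d + 1) := Nat.lt_pow_self (n := d + 1) hp.one_lt
    omega
  · intro β
    by_cases hβK : β ∈ K
    · have hbot : IntermediateField.adjoin (↥K) {β} = ⊥ :=
        IntermediateField.adjoin_simple_eq_bot_iff.mpr
          (IntermediateField.mem_bot.mpr ⟨⟨β, hβK⟩, rfl⟩)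
      rw [hbot, IntermediateField.finrank_bot]
      omega
    · have hβint : IsIntegral (↥K) β := (Algebra.IsAlgebraic.isAlgebraic β).isIntegral
      haveI : FiniteDimensional (↥K) ↥(IntermediateField.adjoin (↥K) {β}) :=
        IntermediateField.adjoin.finiteDimensional hβint
      set E := IntermediateField.adjoin (↥K) {β} with hE
      set M := normalClosure (↥K) (↥E) (AlgebraicClosure ℚ) with hM
      haveI : FiniteDimensional (↥K) (↥M) := normalClosure.is_finiteDimensional (↥K) (↥E) _
      haveI : IsAlgClosure (↥K) (AlgebraicClosure ℚ) := ⟨inferInstance, inferInstance⟩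
      haveI hnormalQb : Normal (↥K) (AlgebraicClosure ℚ) := inferInstance
      haveI : Normal (↥K) (↥M) := normalClosure.normal (↥K) (↥E) _
      haveI : CharZero (↥K) := charZero_of_injective_algebraMap (algebraMap ℚ (↥K)).injective
      haveI : Algebra.IsIntegral (↥K) (↥M) := Algebra.IsIntegral.of_finite (↥K) (↥M)
      haveI : IsGalois (↥K) (↥M) := ⟨⟩
      haveI : Finite (↥M ≃ₐ[↥K] ↥M) := @Finite.of_fintype _ (AlgEquiv.fintype (↥K) (↥M))
      have hβM : β ∈ M :=
        IntermediateField.le_normalClosure E (IntermediateField.mem_adjoin_simple_self (↥K) β)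
      have hKle : K ≤ IntermediateField.restrictScalars ℚ M := by
        intro c hcK
        rw [IntermediateField.mem_restrictScalars]
        exact M.algebraMap_mem ⟨c, hcK⟩
      have hMne : IntermediateField.restrictScalars ℚ M ≠ K := by
        intro h
        exact hβK (h ▸ (IntermediateField.mem_restrictScalars ℚ).mpr hβM)
      have haM : a ∈ M := by
        by_contra hnot
        exact hMne (hKmax (IntermediateField.restrictScalars ℚ M) hKle
          (fun hmem => hnot ((IntermediateField.mem_restrictScalars ℚ).mp hmem)))
      set x : ↥M := ⟨a, haM⟩ with hx
      have hx2 : x ^ p = (2 : ↥M) := by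
        apply Subtype.ext
        push_cast
        exact haroot
      have hxirr : Irreducible (X ^ p - C (2 : ↥K)) :=
        X_pow_sub_C_irreducible_of_prime hp hKpow
      have hxmin : minpoly (↥K) x = X ^ p - C (2 : ↥K) := by
        refine (minpoly.eq_of_irreducible_of_monic hxirr ?_
          (monic_X_pow_sub_C _ hp.pos.ne')).symm
        simp [hx2, map_ofNat]
      have hxint : IsIntegral (↥K) x := Algebra.IsIntegral.isIntegral x
      haveI := IntermediateField.adjoin.finiteDimensional hxint
      have hrkx : Module.finrank (↥K) ↥(IntermediateField.adjoin (↥K) {x}) = p := by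
        rw [IntermediateField.adjoin.finrank hxint, hxmin, natDegree_X_pow_sub_C]
      have hcard : Nat.card (↥M ≃ₐ[↥K] ↥M) = Module.finrank (↥K) (↥M) := by
        have h := IsGalois.card_aut_eq_finrank (↥K) (↥M)
        exact h
      have hpdvd : p ∣ Nat.card (↥M ≃ₐ[↥K] ↥M) := by
        rw [hcard, ← Module.finrank_mul_finrank (↥K) ↥(IntermediateField.adjoin (↥K) {x}) (↥M),
          hrkx]
        exact dvd_mul_right _ _
      have hfixbot :
          IntermediateField.fixingSubgroup (⊥ : IntermediateField (↥K) (↥M)) = ⊤ := by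
        rw [eq_top_iff]
        intro σ _
        rw [IntermediateField.mem_fixingSubgroup_iff]
        intro z hz
        obtain ⟨c, rfl⟩ := IntermediateField.mem_bot.mp hz
        exact σ.commutes c
      have claim1 : ∀ H : Subgroup (↥M ≃ₐ[↥K] ↥M), H ≠ ⊤ →
          x ∈ IntermediateField.fixedField H := by
        intro H hH
        have hne : IntermediateField.fixedField H ≠ ⊥ := by
          intro hbotF
          apply hH
          rw [← IntermediateField.fixingSubgroup_fixedField H, hbotF, hfixbot]
        obtain ⟨t, htF, htb⟩ : ∃ t, t ∈ IntermediateField.fixedField H ∧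
            t ∉ (⊥ : IntermediateField (↥K) (↥M)) := by
          by_contra hcon
          push_neg at hcon
          exact hne (le_antisymm (fun z hz => hcon z hz) bot_le)
        have hKF2 : K ≤ IntermediateField.restrictScalars ℚ
            ((IntermediateField.fixedField H).map (IntermediateField.val M)) := by
          intro c hcK
          rw [IntermediateField.mem_restrictScalars]
          exact ⟨algebraMap (↥K) (↥M) ⟨c, hcK⟩,
            (IntermediateField.fixedField H).algebraMap_mem _, rfl⟩
        have hF2ne : IntermediateField.restrictScalars ℚ
            ((IntermediateField.fixedField H).map (IntermediateField.val M)) ≠ K := by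
          intro h
          have htF2 : (t : AlgebraicClosure ℚ) ∈ IntermediateField.restrictScalars ℚ
              ((IntermediateField.fixedField H).map (IntermediateField.val M)) := by
            rw [IntermediateField.mem_restrictScalars]
            exact ⟨t, htF, rfl⟩
          rw [h] at htF2
          have htK : (t : AlgebraicClosure ℚ) ∈ K := htF2
          apply htb
          rw [IntermediateField.mem_bot]
          exact ⟨⟨(t : AlgebraicClosure ℚ), htK⟩, rfl⟩
        have haF2 : a ∈ IntermediateField.restrictScalars ℚ
            ((IntermediateField.fixedField H).map (IntermediateField.val M)) := by
          by_contra hnot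
          exact hF2ne (hKmax _ hKF2 hnot)
        rw [IntermediateField.mem_restrictScalars] at haF2
        have haF2' : a ∈ (IntermediateField.val M) '' (IntermediateField.fixedField H :
            Set (↥M)) := by
          rw [← IntermediateField.coe_map]
          exact haF2
        obtain ⟨s, hsF, hsval⟩ := haF2'
        have hsx : s = x := Subtype.ext hsval
        rwa [hsx] at hsF
      have claim1' : ∀ H : Subgroup (↥M ≃ₐ[↥K] ↥M), H ≠ ⊤ →
          H ≤ MulAction.stabilizer (↥M ≃ₐ[↥K] ↥M) x := by
        intro H hH τ hτ
        exact claim1 H hH ⟨τ, hτ⟩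
      have hNne : MulAction.stabilizer (↥M ≃ₐ[↥K] ↥M) x ≠ ⊤ := by
        intro htop
        have hxbot : x ∈ (⊥ : IntermediateField (↥K) (↥M)) := by
          have h1 : IntermediateField.fixedField (⊤ : Subgroup (↥M ≃ₐ[↥K] ↥M)) = ⊥ := by
            conv_lhs => rw [← hfixbot]
            exact IsGalois.fixedField_fixingSubgroup ⊥
          rw [← h1]
          exact fun σ => by
            have hmem : (σ : ↥M ≃ₐ[↥K] ↥M) ∈ MulAction.stabilizer (↥M ≃ₐ[↥K] ↥M) x := by
              rw [htop]; trivial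
            exact hmem
        obtain ⟨c, hc⟩ := IntermediateField.mem_bot.mp hxbot
        apply haK
        have hceq : (c : AlgebraicClosure ℚ) = a := congrArg Subtype.val hc
        rw [← hceq]
        exact c.2
      obtain ⟨σ, hσ⟩ : ∃ σ : ↥M ≃ₐ[↥K] ↥M, σ ∉ MulAction.stabilizer (↥M ≃ₐ[↥K] ↥M) x := by
        by_contra h
        push_neg at h
        exact hNne ((Subgroup.eq_top_iff' _).mpr h)
      have hcard0 : Nat.card (↥M ≃ₐ[↥K] ↥M) ≠ 0 := Nat.card_pos.ne'
      have hqeq : ∀ q : ℕ, q.Prime → q ∣ Nat.card (↥M ≃ₐ[↥K] ↥M) → q = p := by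
        intro q hq hqdvd
        by_contra hqp
        have hgen : ∀ g : ↥M ≃ₐ[↥K] ↥M, g ∈ Subgroup.zpowers σ := by
          intro g
          have hzp : Subgroup.zpowers σ = ⊤ := by
            by_contra h
            exact hσ (claim1' _ h (Subgroup.mem_zpowers σ))
          rw [hzp]; trivial
        have horder : orderOf σ = Nat.card (↥M ≃ₐ[↥K] ↥M) :=
          orderOf_eq_card_of_forall_mem_zpowers hgen
        have hpow_mem : ∀ r : ℕ, r.Prime → r ∣ Nat.card (↥M ≃ₐ[↥K] ↥M) →
            σ ^ r ∈ MulAction.stabilizer (↥M ≃ₐ[↥K] ↥M) x := by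
          intro r hr hrdvd
          have hzp2 : Subgroup.zpowers (σ ^ r) ≠ ⊤ := by
            intro htop2
            have h1 : orderOf (σ ^ r) = Nat.card (↥M ≃ₐ[↥K] ↥M) :=
              orderOf_eq_card_of_forall_mem_zpowers (fun g => by rw [htop2]; trivial)
            have h2 : orderOf (σ ^ r) = orderOf σ / Nat.gcd (orderOf σ) r := orderOf_pow σ
            rw [horder] at h2
            rw [Nat.gcd_eq_right hrdvd] at h2
            rw [h1] at h2
            have hlt := Nat.div_lt_self (Nat.pos_of_ne_zero hcard0) hr.one_lt
            omega
          exact claim1' _ hzp2 (Subgroup.mem_zpowers _)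
        have hσq := hpow_mem q hq hqdvd
        have hσp := hpow_mem p hp hpdvd
        have hcop : Nat.Coprime p q := (Nat.coprime_primes hp hq).mpr (fun h => hqp h.symm)
        obtain ⟨u, v, huv⟩ : IsCoprime (p : ℤ) (q : ℤ) := Nat.isCoprime_iff_coprime.mpr hcop
        apply hσ
        have h1 : ((σ ^ p) ^ u) * ((σ ^ q) ^ v) = σ := by
          rw [← zpow_natCast σ p, ← zpow_natCast σ q, ← zpow_mul, ← zpow_mul, ← zpow_add]
          rw [show (p : ℤ) * u + (q : ℤ) * v = 1 from by linarith [huv]]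
          exact zpow_one σ
        rw [← h1]
        exact Subgroup.mul_mem _ (Subgroup.zpow_mem _ hσp u) (Subgroup.zpow_mem _ hσq v)
      obtain ⟨m, hm⟩ : ∃ m, Nat.card (↥M ≃ₐ[↥K] ↥M) = p ^ m :=
        ⟨_, Nat.eq_prime_pow_of_unique_prime_dvd hcard0 (fun {d} hd hdd => hqeq d hd hdd)⟩
      set y : ↥M := ⟨β, hβM⟩ with hy
      have hyint : IsIntegral (↥K) y := Algebra.IsIntegral.isIntegral y
      haveI := IntermediateField.adjoin.finiteDimensional hyint
      have hdeg : Module.finrank (↥K) (↥E) =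
          Module.finrank (↥K) ↥(IntermediateField.adjoin (↥K) {y}) := by
        rw [hE, IntermediateField.adjoin.finrank hβint, IntermediateField.adjoin.finrank hyint]
        congr 1
        have hval : ((IntermediateField.val M) y : AlgebraicClosure ℚ) = β := rfl
        rw [← hval]
        exact minpoly.algHom_eq (IntermediateField.val M) Subtype.val_injective y
      have hfr : Module.finrank (↥K) (↥M) = p ^ m := by rw [← hcard, hm]
      have hdvd2 : Module.finrank (↥K) (↥E) ∣ p ^ m := by
        rw [hdeg, ← hfr]
        exact ⟨Module.finrank ↥(IntermediateField.adjoin (↥K) {y}) (↥M),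
          (Module.finrank_mul_finrank (↥K) ↥(IntermediateField.adjoin (↥K) {y}) (↥M)).symm⟩
      intro hEΔ
      rw [hEΔ] at hdvd2
      obtain ⟨j, hj, hΔj⟩ := (Nat.dvd_prime_pow hp).mp hdvd2
      rcases Nat.eq_zero_or_pos j with rfl | hjpos
      · rw [pow_zero] at hΔj
        omega
      · have hple : p ≤ p ^ j := Nat.le_self_pow hjpos.ne' p
        rw [← hΔj] at hple
        omega
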